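/- Let k be a field of characteristic 2 and r ≥ 1. Consider the quotient k-algebra homomorphism from k[s_1,…,s_r,t_1,…,t_r] to k[x_1,…,x_{r−1},t_1,…,t_r] sending s_i ↦ x_i for 1 ≤ i ≤ r−1, s_r ↦ x_1+⋯+x_{r−1}, and t_i ↦ t_i. Then for 1 ≤ a ≤ r−1, the element ∑_{1≤i_1<⋯<i_a≤r}(∑_{j=1}^a s_{i_j} + ∑_{m=1}^r s_m) t_{i_1}⋯t_{i_a} maps to ∑_{j=1}^{r−1} x_j (t_j + t_r) · e_{a−1}(t_1,…,\hat{t_j},…,t_{r−1}). -/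

import Mathlib

open MvPolynomial Finset

section AuxLemmas

variable {ι R : Type*} [CommRing R] [DecidableEq ι]

lemma aux_split (t : ι → R) (S : Finset ι) {i : ι} (hi : i ∈ S) (n : ℕ) :
    ∑ T ∈ S.powersetCard (n+1), ∏ m ∈ T, t m
      = (∑ T ∈ (S.erase i).powersetCard (n+1), ∏ m ∈ T, t m)
        + t i * ∑ T ∈ (S.erase i).powersetCard n, ∏ m ∈ T, t m := by
  conv_lhs => rw [← Finset.insert_erase hi]
  rw [Finset.powersetCard_succ_insert (Finset.notMem_erase _ _)]
  rw [Finset.sum_union]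
  · congr 1
    rw [Finset.sum_image, Finset.mul_sum]
    · refine Finset.sum_congr rfl fun T hT => ?_
      rw [Finset.mem_powersetCard] at hT
      rw [Finset.prod_insert (fun hmem => Finset.notMem_erase i S (hT.1 hmem))]
    · intro T hT T' hT' h
      rw [Finset.mem_coe, Finset.mem_powersetCard] at hT hT'
      have hi1 : i ∉ T := fun hmem => Finset.notMem_erase i S (hT.1 hmem)
      have hi2 : i ∉ T' := fun hmem => Finset.notMem_erase i S (hT'.1 hmem)
      rw [← Finset.erase_insert hi1, ← Finset.erase_insert hi2, h]
  · rw [Finset.disjoint_right]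
    intro T hT hT'
    simp only [Finset.mem_image] at hT
    obtain ⟨T', hT', rfl⟩ := hT
    rw [Finset.mem_powersetCard] at hT'
    exact Finset.notMem_erase i S (hT'.1 (Finset.mem_insert_self _ _))

lemma aux_filter (t : ι → R) (S : Finset ι) {i : ι} (hi : i ∈ S) (n : ℕ) :
    ∑ T ∈ (S.powersetCard (n+1)).filter (i ∈ ·), ∏ m ∈ T, t m
      = t i * ∑ T ∈ (S.erase i).powersetCard n, ∏ m ∈ T, t m := by
  conv_lhs => rw [← Finset.insert_erase hi]
  rw [Finset.powersetCard_succ_insert (Finset.notMem_erase _ _), Finset.filter_union]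
  have h1 : ((S.erase i).powersetCard (n+1)).filter (i ∈ ·) = ∅ := by
    rw [Finset.filter_eq_empty_iff]
    intro T hT
    rw [Finset.mem_powersetCard] at hT
    exact fun hmem => Finset.notMem_erase i S (hT.1 hmem)
  have h2 : (((S.erase i).powersetCard n).image (insert i)).filter (i ∈ ·)
      = ((S.erase i).powersetCard n).image (insert i) := by
    rw [Finset.filter_eq_self]
    intro T hT
    simp only [Finset.mem_image] at hT
    obtain ⟨T', _, rfl⟩ := hT
    exact Finset.mem_insert_self _ _
  rw [h1, h2, Finset.empty_union, Finset.sum_image, Finset.mul_sum]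
  · refine Finset.sum_congr rfl fun T hT => ?_
    rw [Finset.mem_powersetCard] at hT
    rw [Finset.prod_insert (fun hmem => Finset.notMem_erase i S (hT.1 hmem))]
  · intro T hT T' hT' h
    rw [Finset.mem_coe, Finset.mem_powersetCard] at hT hT'
    have hi1 : i ∉ T := fun hmem => Finset.notMem_erase i S (hT.1 hmem)
    have hi2 : i ∉ T' := fun hmem => Finset.notMem_erase i S (hT'.1 hmem)
    rw [← Finset.erase_insert hi1, ← Finset.erase_insert hi2, h]

lemma aux_swap (S : Finset ι) (n : ℕ) (c : ι → R) (q : Finset ι → R) :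
    ∑ T ∈ S.powersetCard n, (∑ i ∈ T, c i) * q T
      = ∑ i ∈ S, c i * ∑ T ∈ (S.powersetCard n).filter (i ∈ ·), q T := by
  have key : ∀ T ∈ S.powersetCard n,
      (∑ i ∈ T, c i) * q T = ∑ i ∈ S, if i ∈ T then c i * q T else 0 := by
    intro T hT
    rw [Finset.mem_powersetCard] at hT
    rw [Finset.sum_mul, ← Finset.sum_filter, Finset.filter_mem_eq_inter,
      Finset.inter_eq_right.mpr hT.1]
  rw [Finset.sum_congr rfl key, Finset.sum_comm]
  refine Finset.sum_congr rfl fun i _ => ?_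
  rw [Finset.mul_sum, Finset.sum_filter]

open MvPolynomial Finset

lemma aux_mapsum {R : Type*} [CommRing R] {m : ℕ} (t : Fin (m+1) → R) (S : Finset (Fin m)) (n : ℕ) :
    ∑ T ∈ (S.map Fin.castSuccEmb).powersetCard n, ∏ i ∈ T, t i
      = ∑ T ∈ S.powersetCard n, ∏ i ∈ T, t i.castSucc := by
  rw [Finset.powersetCard_map, Finset.sum_map]
  refine Finset.sum_congr rfl fun T _ => ?_
  show ∏ i ∈ T.map Fin.castSuccEmb, t i = _
  rw [Finset.prod_map]
  rfl

lemma aux_erase_last {m : ℕ} (j : Fin m) :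
    ((Finset.univ : Finset (Fin (m+1))).erase j.castSucc).erase (Fin.last m)
      = ((Finset.univ : Finset (Fin m)).erase j).map Fin.castSuccEmb := by
  rw [Finset.erase_right_comm]
  have h1 : (Finset.univ : Finset (Fin (m+1))).erase (Fin.last m)
      = (Finset.univ : Finset (Fin m)).map Fin.castSuccEmb := by
    rw [Fin.univ_castSuccEmb, Finset.erase_cons]
  rw [h1, Finset.map_erase]
  rfl

lemma aux_key {R : Type*} [CommRing R] [CharP R 2] {m : ℕ} (t : Fin (m+1) → R)
    (j : Fin m) (b : ℕ) :
    t j.castSucc * (∑ T ∈ ((Finset.univ : Finset (Fin (m+1))).erase j.castSucc).powersetCard b,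
        ∏ i ∈ T, t i)
      + t (Fin.last m) * (∑ T ∈ ((Finset.univ : Finset (Fin (m+1))).erase (Fin.last m)).powersetCard b,
        ∏ i ∈ T, t i)
    = (t j.castSucc + t (Fin.last m)) *
        ∑ T ∈ ((Finset.univ : Finset (Fin m)).erase j).powersetCard b, ∏ i ∈ T, t i.castSucc := by
  have hne : j.castSucc ≠ Fin.last m := (Fin.castSucc_lt_last j).ne
  have h2 : (2 : R) = 0 := by exact_mod_cast CharP.cast_eq_zero R 2
  cases b with
  | zero =>
    simp only [Finset.powersetCard_zero, Finset.sum_singleton, Finset.prod_empty]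
    ring
  | succ c =>
    rw [aux_split t _ (Finset.mem_erase.mpr ⟨hne.symm, Finset.mem_univ _⟩) c,
        aux_split t _ (Finset.mem_erase.mpr ⟨hne, Finset.mem_univ _⟩) c,
        Finset.erase_right_comm (a := Fin.last m) (b := j.castSucc)]
    rw [aux_erase_last, aux_mapsum, aux_mapsum]
    rw [← aux_mapsum t ((Finset.univ : Finset (Fin m)).erase j) (c+1), ← aux_erase_last]
    set A := ∑ T ∈ ((((Finset.univ : Finset (Fin (m+1))).erase j.castSucc).erase (Fin.last m))).powersetCard (c+1), ∏ i ∈ T, t i with hA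
    set B := ∑ T ∈ ((Finset.univ : Finset (Fin m)).erase j).powersetCard c, ∏ i ∈ T, t i.castSucc with hB
    linear_combination (t j.castSucc * t (Fin.last m) * B) * h2
lemma main_aux (k : Type*) [Field k] [CharP k 2] (m b : ℕ) (har : b + 1 ≤ m) :
    ∑ T ∈ Finset.powersetCard (b+1) (Finset.univ : Finset (Fin (m+1))),
      ((∑ i ∈ T, (if h : (i : ℕ) < m then (X (Sum.inl (⟨(i : ℕ), h⟩ : Fin m)) :
            MvPolynomial (Fin m ⊕ Fin (m+1)) k) else ∑ j : Fin m, X (Sum.inl j)))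
        + ∑ i : Fin (m+1), (if h : (i : ℕ) < m then X (Sum.inl (⟨(i : ℕ), h⟩ : Fin m))
            else ∑ j : Fin m, X (Sum.inl j))) * ∏ i ∈ T, X (Sum.inr i)
    = ∑ j : Fin m, X (Sum.inl j) * (X (Sum.inr j.castSucc) + X (Sum.inr (Fin.last m))) *
        ∑ T ∈ Finset.powersetCard b ((Finset.univ : Finset (Fin m)).erase j),
          ∏ i ∈ T, X (Sum.inr i.castSucc) := by
  have h0 : (∑ i : Fin (m+1), (if h : (i : ℕ) < m then (X (Sum.inl (⟨(i : ℕ), h⟩ : Fin m)) :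
      MvPolynomial (Fin m ⊕ Fin (m+1)) k) else ∑ j : Fin m, X (Sum.inl j))) = 0 := by
    rw [Fin.sum_univ_castSucc]
    simp only [Fin.coe_castSucc, Fin.is_lt, dite_true, Fin.eta, Fin.val_last,
      lt_self_iff_false, dite_false]
    exact CharTwo.add_self_eq_zero _
  rw [h0]
  simp only [add_zero]
  rw [aux_swap]
  have hfilt : ∀ i : Fin (m+1), (i ∈ Finset.univ) → ((if h : (i : ℕ) < m then (X (Sum.inl (⟨(i : ℕ), h⟩ : Fin m)) :
      MvPolynomial (Fin m ⊕ Fin (m+1)) k) else ∑ j : Fin m, X (Sum.inl j)) *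
        ∑ T ∈ (Finset.powersetCard (b+1) (Finset.univ : Finset (Fin (m+1)))).filter (i ∈ ·),
          ∏ i ∈ T, X (Sum.inr i))
      = (if h : (i : ℕ) < m then X (Sum.inl (⟨(i : ℕ), h⟩ : Fin m))
          else ∑ j : Fin m, X (Sum.inl j)) *
        (X (Sum.inr i) * ∑ T ∈ ((Finset.univ : Finset (Fin (m+1))).erase i).powersetCard b,
          ∏ i ∈ T, X (Sum.inr i)) := by
    intro i _
    rw [aux_filter _ _ (Finset.mem_univ i)]
  rw [Finset.sum_congr rfl hfilt, Fin.sum_univ_castSucc]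
  simp only [Fin.coe_castSucc, Fin.is_lt, dite_true, Fin.eta, Fin.val_last,
    lt_self_iff_false, dite_false]
  rw [Finset.sum_mul, ← Finset.sum_add_distrib]
  refine Finset.sum_congr rfl fun j _ => ?_
  have := aux_key (fun i : Fin (m+1) => (X (Sum.inr i) : MvPolynomial (Fin m ⊕ Fin (m+1)) k)) j b
  calc X (Sum.inl j) * (X (Sum.inr j.castSucc) *
          ∑ T ∈ (Finset.univ.erase j.castSucc).powersetCard b, ∏ i ∈ T, X (Sum.inr i))
        + X (Sum.inl j) * (X (Sum.inr (Fin.last m)) *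
          ∑ T ∈ (Finset.univ.erase (Fin.last m)).powersetCard b, ∏ i ∈ T, X (Sum.inr i))
      = X (Sum.inl j) * (X (Sum.inr j.castSucc) *
          (∑ T ∈ (Finset.univ.erase j.castSucc).powersetCard b, ∏ i ∈ T, X (Sum.inr i))
        + X (Sum.inr (Fin.last m)) *
          ∑ T ∈ (Finset.univ.erase (Fin.last m)).powersetCard b, ∏ i ∈ T, X (Sum.inr i)) := by
        ring
    _ = X (Sum.inl j) * ((X (Sum.inr j.castSucc) + X (Sum.inr (Fin.last m))) *
          ∑ T ∈ ((Finset.univ : Finset (Fin m)).erase j).powersetCard b,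
            ∏ i ∈ T, X (Sum.inr i.castSucc)) := by rw [this]
    _ = X (Sum.inl j) * (X (Sum.inr j.castSucc) + X (Sum.inr (Fin.last m))) *
          ∑ T ∈ ((Finset.univ : Finset (Fin m)).erase j).powersetCard b,
            ∏ i ∈ T, X (Sum.inr i.castSucc) := by ring

end AuxLemmas

/-- Let `k` be a field of characteristic 2 and `r ≥ 1`. Under
the `k`-algebra homomorphism `k[s₁,…,s_r,t₁,…,t_r] → k[x₁,…,x_{r−1},t₁,…,t_r]`
sending `s_i ↦ x_i` (`1 ≤ i ≤ r−1`), `s_r ↦ x₁+⋯+x_{r−1}`, `t_i ↦ t_i`, the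
element `∑_{i₁<⋯<i_a} (∑_j s_{i_j} + ∑_m s_m) t_{i₁}⋯t_{i_a}` (for `1 ≤ a ≤ r−1`)
maps to `∑_{j=1}^{r−1} x_j (t_j + t_r) · e_{a−1}(t₁,…,t̂_j,…,t_{r−1})`.
`Sum.inl`/`Sum.inr` index the `s`/`t` (resp. `x`/`t`) variables. -/
theorem restriction_of_odd_u_classes
    (k : Type*) [Field k] [CharP k 2] (r : ℕ) (hr : 1 ≤ r) (a : ℕ) (ha : 1 ≤ a)
    (har : a ≤ r - 1) :
    MvPolynomial.aeval (R := k)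
        (fun v : Fin r ⊕ Fin r =>
          match v with
          | Sum.inl i =>
              if h : (i : ℕ) < r - 1 then
                (X (Sum.inl (⟨(i : ℕ), h⟩ : Fin (r - 1))) :
                  MvPolynomial (Fin (r - 1) ⊕ Fin r) k)
              else ∑ j : Fin (r - 1), X (Sum.inl j)
          | Sum.inr i => X (Sum.inr i))
        (∑ s ∈ Finset.powersetCard a (Finset.univ : Finset (Fin r)),
          ((∑ i ∈ s, X (Sum.inl i)) + ∑ m : Fin r, X (Sum.inl m)) *
            ∏ i ∈ s, X (Sum.inr i)) =
      ∑ j : Fin (r - 1),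
        X (Sum.inl j) *
          (X (Sum.inr (Fin.castLE (Nat.sub_le r 1) j)) +
            X (Sum.inr (⟨r - 1, by omega⟩ : Fin r))) *
          ∑ s ∈ Finset.powersetCard (a - 1)
              ((Finset.univ : Finset (Fin (r - 1))).erase j),
            ∏ i ∈ s, X (Sum.inr (Fin.castLE (Nat.sub_le r 1) i)) := by
  obtain ⟨m, rfl⟩ : ∃ m, r = m + 1 := ⟨r - 1, by omega⟩
  obtain ⟨b, rfl⟩ : ∃ b, a = b + 1 := ⟨a - 1, by omega⟩
  rw [map_sum]
  simp only [map_mul, map_add, map_sum, map_prod, MvPolynomial.aeval_X]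
  exact main_aux k m b (by omega)
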